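/- Let m, m' ∈ ℂ with Re(m) > −1 and Re(m') > −1. Then, as t → +∞ along the reals, Γ((m+1−it)/2)·Γ((m'+1+it)/2) / ( Γ((m+1+it)/2)·Γ((m'+1−it)/2) ) → e^{−iπ(m−m')/2}. -/

import Mathlib

open Filter

open Real Topology Finset

lemma arctan_bracket {s : ℝ} (hs : 0 < s) (j : ℕ) :
    s / (((j:ℝ)+1)^2 + s^2) ≤ arctan (((j:ℝ)+1)/s) - arctan ((j:ℝ)/s) ∧
    arctan (((j:ℝ)+1)/s) - arctan ((j:ℝ)/s) ≤ s / ((j:ℝ)^2 + s^2) := by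
  have hj : (0:ℝ) ≤ (j:ℝ)/s := by positivity
  have hab : (j:ℝ)/s < ((j:ℝ)+1)/s := by
    rw [div_lt_div_iff₀ hs hs]; nlinarith
  obtain ⟨x, hx, hxeq⟩ := exists_hasDerivAt_eq_slope arctan (fun x => 1/(1+x^2)) hab
    (Real.continuous_arctan.continuousOn) (fun x _ => Real.hasDerivAt_arctan x)
  have hxlb : (j:ℝ)/s < x := hx.1
  have hxub : x < ((j:ℝ)+1)/s := hx.2
  have hx0 : 0 ≤ x := le_trans hj hxlb.le
  have key : arctan (((j:ℝ)+1)/s) - arctan ((j:ℝ)/s) = (1/(1+x^2)) * (1/s) := by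
    field_simp at hxeq ⊢
    linear_combination -hxeq
  rw [key]
  have h1 : 0 < 1 + x^2 := by positivity
  constructor
  · rw [div_le_iff₀ (by positivity), one_div_mul_one_div]
    rw [div_mul_eq_mul_div, le_div_iff₀ (by positivity)]
    have hxx : x^2 ≤ (((j:ℝ)+1)/s)^2 := by
      apply sq_le_sq' (by linarith) hxub.le
    have h2 : s^2 * x^2 ≤ ((j:ℝ)+1)^2 := by
      calc s^2 * x^2 ≤ s^2 * (((j:ℝ)+1)/s)^2 := by gcongr
        _ = ((j:ℝ)+1)^2 := by field_simp
    nlinarith [hs]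
  · rw [one_div_mul_one_div, div_le_div_iff₀ (by positivity) (by positivity)]
    have h2 : ((j:ℝ))^2 ≤ s^2 * x^2 := by
      have hxx : ((j:ℝ)/s)^2 ≤ x^2 := by
        apply sq_le_sq' (by linarith) hxlb.le
      calc ((j:ℝ))^2 = s^2 * ((j:ℝ)/s)^2 := by field_simp
        _ ≤ s^2 * x^2 := by gcongr
    nlinarith [hs]
lemma arctan_le_arctan' {a b : ℝ} (h : a ≤ b) : arctan a ≤ arctan b :=
  Real.arctan_strictMono.monotone h

lemma hasSum_W {s : ℝ} (hs : 0 < s) :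
    HasSum (fun j : ℕ => arctan (((j:ℝ)+1)/s) - arctan ((j:ℝ)/s)) (π/2) := by
  have hnn : ∀ j : ℕ, 0 ≤ arctan (((j:ℝ)+1)/s) - arctan ((j:ℝ)/s) := by
    intro j
    have : arctan ((j:ℝ)/s) ≤ arctan (((j:ℝ)+1)/s) :=
      arctan_le_arctan' (by gcongr <;> linarith)
    linarith
  have hpart : ∀ n : ℕ, ∑ j ∈ Finset.range n,
      (arctan (((j:ℝ)+1)/s) - arctan ((j:ℝ)/s)) = arctan ((n:ℝ)/s) := by
    intro n
    have := Finset.sum_range_sub (fun j : ℕ => arctan ((j:ℝ)/s)) n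
    simp only [Nat.cast_add, Nat.cast_one] at this
    rw [this]
    simp [Real.arctan_zero]
  have hlim : Tendsto (fun n : ℕ => arctan ((n:ℝ)/s)) atTop (𝓝 (π/2)) := by
    refine (Real.tendsto_arctan_atTop.mono_right nhdsWithin_le_nhds).comp ?_
    exact (tendsto_natCast_atTop_atTop).atTop_div_const hs
  have hsummable : Summable (fun j : ℕ => arctan (((j:ℝ)+1)/s) - arctan ((j:ℝ)/s)) := by
    apply summable_of_sum_range_le hnn
    intro n
    rw [hpart]
    exact (Real.arctan_lt_pi_div_two _).le
  have := hsummable.hasSum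
  have h2 : Tendsto (fun n : ℕ => ∑ j ∈ Finset.range n,
      (arctan (((j:ℝ)+1)/s) - arctan ((j:ℝ)/s))) atTop (𝓝 (π/2)) := by
    simp only [hpart]; exact hlim
  rwa [tendsto_nhds_unique this.tendsto_sum_nat h2] at this

lemma hasSum_T {s : ℝ} (hs : 0 < s) :
    HasSum (fun j : ℕ => s/((j:ℝ)^2+s^2) - s/(((j:ℝ)+1)^2+s^2)) (1/s) := by
  have hnn : ∀ j : ℕ, 0 ≤ s/((j:ℝ)^2+s^2) - s/(((j:ℝ)+1)^2+s^2) := by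
    intro j
    have : s/(((j:ℝ)+1)^2+s^2) ≤ s/((j:ℝ)^2+s^2) := by
      apply div_le_div_of_nonneg_left hs.le (by positivity)
      nlinarith [Nat.cast_nonneg (α := ℝ) j]
    linarith
  have hpart : ∀ n : ℕ, ∑ j ∈ Finset.range n,
      (s/((j:ℝ)^2+s^2) - s/(((j:ℝ)+1)^2+s^2)) = 1/s - s/((n:ℝ)^2+s^2) := by
    intro n
    have := Finset.sum_range_sub' (fun j : ℕ => s/((j:ℝ)^2+s^2)) n
    simp only [Nat.cast_add, Nat.cast_one] at this
    rw [this]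
    have h0 : ((0:ℕ):ℝ)^2 + s^2 = s^2 := by norm_num
    rw [h0, sq, ← div_div, div_self (ne_of_gt hs)]
  have hlim : Tendsto (fun n : ℕ => 1/s - s/((n:ℝ)^2+s^2)) atTop (𝓝 (1/s)) := by
    have h0 : Tendsto (fun n : ℕ => s/((n:ℝ)^2+s^2)) atTop (𝓝 0) := by
      apply Tendsto.const_div_atTop
      apply tendsto_atTop_add_const_right
      exact (tendsto_pow_atTop (two_ne_zero)).comp tendsto_natCast_atTop_atTop
    simpa using (tendsto_const_nhds (x := 1/s)).sub h0
  have hsummable : Summable (fun j : ℕ => s/((j:ℝ)^2+s^2) - s/(((j:ℝ)+1)^2+s^2)) := by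
    apply summable_of_sum_range_le (c := 1/s) hnn
    intro n
    rw [hpart]
    have h3 : 0 ≤ s/((n:ℝ)^2+s^2) := by positivity
    linarith
  have := hsummable.hasSum
  have h2 : Tendsto (fun n : ℕ => ∑ j ∈ Finset.range n,
      (s/((j:ℝ)^2+s^2) - s/(((j:ℝ)+1)^2+s^2))) atTop (𝓝 (1/s)) := by
    simp only [hpart]; exact hlim
  rwa [tendsto_nhds_unique this.tendsto_sum_nat h2] at this

lemma summable_g {s : ℝ} (hs : 0 < s) : Summable (fun j : ℕ => s/((j:ℝ)^2+s^2)) := by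
  have hsum : Summable (fun j : ℕ => (arctan (((j:ℝ)+1)/s) - arctan ((j:ℝ)/s)) +
      (s/((j:ℝ)^2+s^2) - s/(((j:ℝ)+1)^2+s^2))) :=
    (hasSum_W hs).summable.add (hasSum_T hs).summable
  refine Summable.of_nonneg_of_le (fun j => by positivity) (fun j => ?_) hsum
  have h := (arctan_bracket hs j).1
  linarith

lemma summable_E {s : ℝ} (hs : 0 < s) : Summable (fun j : ℕ => 1/(((j:ℝ)+1)^2+s^2)) := by
  have hsum : Summable (fun j : ℕ => (1/s) * (arctan (((j:ℝ)+1)/s) - arctan ((j:ℝ)/s))) :=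
    (hasSum_W hs).summable.mul_left (1/s)
  refine Summable.of_nonneg_of_le (fun j => by positivity) (fun j => ?_) hsum
  have h := (arctan_bracket hs j).1
  have heq : 1/(((j:ℝ)+1)^2+s^2) = (1/s) * (s/(((j:ℝ)+1)^2+s^2)) := by field_simp
  rw [heq]
  exact mul_le_mul_of_nonneg_left h (by positivity)

lemma tsum_E_le {s : ℝ} (hs : 1 ≤ s) : (∑' j : ℕ, 1/(((j:ℝ)+1)^2+s^2)) ≤ 2/s := by
  have hs0 : 0 < s := lt_of_lt_of_le one_pos hs
  have h1 : (∑' j : ℕ, 1/(((j:ℝ)+1)^2+s^2)) ≤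
      ∑' j : ℕ, (1/s) * (arctan (((j:ℝ)+1)/s) - arctan ((j:ℝ)/s)) := by
    apply Summable.tsum_le_tsum _ (summable_E hs0) ((hasSum_W hs0).summable.mul_left (1/s))
    intro j
    have h := (arctan_bracket hs0 j).1
    have : 1/(((j:ℝ)+1)^2+s^2) = (1/s) * (s/(((j:ℝ)+1)^2+s^2)) := by field_simp
    rw [this]
    apply mul_le_mul_of_nonneg_left h (by positivity)
  have h2 : ∑' j : ℕ, (1/s) * (arctan (((j:ℝ)+1)/s) - arctan ((j:ℝ)/s)) = (1/s) * (π/2) := by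
    rw [tsum_mul_left, (hasSum_W hs0).tsum_eq]
  rw [h2] at h1
  have : (1/s) * (π/2) ≤ (1/s) * 2 := by
    apply mul_le_mul_of_nonneg_left _ (by positivity)
    linarith [Real.pi_le_four]
  calc (∑' j : ℕ, 1/(((j:ℝ)+1)^2+s^2)) ≤ (1/s)*(π/2) := h1
    _ ≤ (1/s)*2 := this
    _ = 2/s := by ring

lemma tsum_g_close {s : ℝ} (hs : 1 ≤ s) : |(∑' j : ℕ, s/((j:ℝ)^2+s^2)) - π/2| ≤ 1/s := by
  have hs0 : 0 < s := lt_of_lt_of_le one_pos hs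
  have hg := summable_g hs0
  have hw := (hasSum_W hs0).summable
  have ht := (hasSum_T hs0).summable
  have key : (∑' j : ℕ, s/((j:ℝ)^2+s^2)) - π/2 =
      ∑' j : ℕ, (s/((j:ℝ)^2+s^2) - (arctan (((j:ℝ)+1)/s) - arctan ((j:ℝ)/s))) := by
    rw [Summable.tsum_sub hg hw, (hasSum_W hs0).tsum_eq]
  rw [key]
  have hbound : ∀ j : ℕ, |s/((j:ℝ)^2+s^2) - (arctan (((j:ℝ)+1)/s) - arctan ((j:ℝ)/s))| ≤
      s/((j:ℝ)^2+s^2) - s/(((j:ℝ)+1)^2+s^2) := by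
    intro j
    obtain ⟨hlo, hhi⟩ := arctan_bracket hs0 j
    rw [abs_le]
    constructor <;> linarith
  have habs : Summable (fun j : ℕ =>
      |s/((j:ℝ)^2+s^2) - (arctan (((j:ℝ)+1)/s) - arctan ((j:ℝ)/s))|) := by
    apply Summable.of_nonneg_of_le (fun j => abs_nonneg _) hbound ht
  calc |∑' j : ℕ, (s/((j:ℝ)^2+s^2) - (arctan (((j:ℝ)+1)/s) - arctan ((j:ℝ)/s)))|
      ≤ ∑' j : ℕ, |s/((j:ℝ)^2+s^2) - (arctan (((j:ℝ)+1)/s) - arctan ((j:ℝ)/s))| := by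
        simpa only [Real.norm_eq_abs] using
          norm_tsum_le_tsum_norm (f := fun j : ℕ =>
            s/((j:ℝ)^2+s^2) - (arctan (((j:ℝ)+1)/s) - arctan ((j:ℝ)/s)))
            (by simpa only [Real.norm_eq_abs] using habs)
    _ ≤ ∑' j : ℕ, (s/((j:ℝ)^2+s^2) - s/(((j:ℝ)+1)^2+s^2)) := Summable.tsum_le_tsum hbound habs ht
    _ = 1/s := (hasSum_T hs0).tsum_eq

open Finset

noncomputable def Rnum (c d : ℂ) (s : ℝ) (j : ℕ) : ℂ :=
  (c + Complex.I*s + j) * (d - Complex.I*s + j)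

noncomputable def Rden (c d : ℂ) (s : ℝ) (j : ℕ) : ℂ :=
  (c - Complex.I*s + j) * (d + Complex.I*s + j)

noncomputable def uu (c d : ℂ) (s : ℝ) (j : ℕ) : ℂ :=
  2*Complex.I*s*(d - c) / Rden c d s j

noncomputable def vv (c d : ℂ) (s : ℝ) (j : ℕ) : ℂ :=
  2*Complex.I*s*(d - c) / (((j:ℕ):ℂ)^2+(s:ℂ)^2)

lemma shift_re (z : ℂ) (s : ℝ) (j : ℕ) : (z + Complex.I*s + j).re = z.re + j := by
  simp [Complex.add_re, Complex.mul_re]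

lemma shift_ne_zero {z : ℂ} (hz : 0 < z.re) (s : ℝ) (j : ℕ) : z + Complex.I*s + j ≠ 0 := by
  intro h
  have := shift_re z s j
  rw [h] at this
  simp at this
  have h2 : (0:ℝ) < z.re + j := by positivity
  linarith


lemma sub_shift_ne_zero {z : ℂ} (hz : 0 < z.re) (s : ℝ) (j : ℕ) :
    z - Complex.I*s + j ≠ 0 := by
  have := shift_ne_zero hz (-s) j
  rw [show z + Complex.I*(-s:ℝ) + j = z - Complex.I*s + j by push_cast; ring] at this
  exact this

lemma Rnum_ne_zero {c d : ℂ} (hc : 0 < c.re) (hd : 0 < d.re) (s : ℝ) (j : ℕ) :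
    Rnum c d s j ≠ 0 :=
  mul_ne_zero (shift_ne_zero hc s j) (sub_shift_ne_zero hd s j)

lemma Rden_ne_zero {c d : ℂ} (hc : 0 < c.re) (hd : 0 < d.re) (s : ℝ) (j : ℕ) :
    Rden c d s j ≠ 0 :=
  mul_ne_zero (sub_shift_ne_zero hc s j) (shift_ne_zero hd s j)

lemma ratio_eq_one_add_uu {c d : ℂ} (hc : 0 < c.re) (hd : 0 < d.re) (s : ℝ) (j : ℕ) :
    Rnum c d s j / Rden c d s j = 1 + uu c d s j := by
  have h := Rden_ne_zero hc hd s j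
  rw [uu]
  field_simp
  rw [Rnum, Rden]
  ring

lemma tendsto_prod_ratio (c d : ℂ) (hc : 0 < c.re) (hd : 0 < d.re) (s : ℝ) :
    Tendsto (fun n : ℕ => ∏ j ∈ Finset.range (n+1), (Rnum c d s j / Rden c d s j)) atTop
      (𝓝 (Complex.Gamma (c - Complex.I*s) * Complex.Gamma (d + Complex.I*s) /
        (Complex.Gamma (c + Complex.I*s) * Complex.Gamma (d - Complex.I*s)))) := by
  set a := c - Complex.I*s with ha
  set b := d + Complex.I*s with hb
  set a' := c + Complex.I*s with ha'
  set b' := d - Complex.I*s with hb'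
  have hare : a.re = c.re := by rw [ha]; simp [Complex.sub_re, Complex.mul_re]
  have hbre : b.re = d.re := by rw [hb]; simp [Complex.add_re, Complex.mul_re]
  have ha're : a'.re = c.re := by rw [ha']; simp [Complex.add_re, Complex.mul_re]
  have hb're : b'.re = d.re := by rw [hb']; simp [Complex.sub_re, Complex.mul_re]
  have hΓa' : Complex.Gamma a' ≠ 0 := Complex.Gamma_ne_zero_of_re_pos (by rw [ha're]; exact hc)
  have hΓb' : Complex.Gamma b' ≠ 0 := Complex.Gamma_ne_zero_of_re_pos (by rw [hb're]; exact hd)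
  have h := ((Complex.GammaSeq_tendsto_Gamma a).mul (Complex.GammaSeq_tendsto_Gamma b)).div
    ((Complex.GammaSeq_tendsto_Gamma a').mul (Complex.GammaSeq_tendsto_Gamma b'))
    (mul_ne_zero hΓa' hΓb')
  refine Filter.Tendsto.congr' ?_ h
  filter_upwards [eventually_ge_atTop 1] with n hn
  have hn0 : (n:ℂ) ≠ 0 := Nat.cast_ne_zero.mpr (by omega)
  have hfac : ((Nat.factorial n : ℕ) : ℂ) ≠ 0 := Nat.cast_ne_zero.mpr (Nat.factorial_ne_zero n)
  have hPa : ∏ j ∈ Finset.range (n+1), (a + j) ≠ 0 :=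
    Finset.prod_ne_zero_iff.mpr (fun j _ => sub_shift_ne_zero hc s j)
  have hPb : ∏ j ∈ Finset.range (n+1), (b + j) ≠ 0 :=
    Finset.prod_ne_zero_iff.mpr (fun j _ => shift_ne_zero hd s j)
  have hPa' : ∏ j ∈ Finset.range (n+1), (a' + j) ≠ 0 :=
    Finset.prod_ne_zero_iff.mpr (fun j _ => shift_ne_zero hc s j)
  have hPb' : ∏ j ∈ Finset.range (n+1), (b' + j) ≠ 0 :=
    Finset.prod_ne_zero_iff.mpr (fun j _ => sub_shift_ne_zero hd s j)
  have hcpa : (n:ℂ)^a ≠ 0 := by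
    rw [Complex.cpow_def_of_ne_zero hn0]; exact Complex.exp_ne_zero _
  have hcpb : (n:ℂ)^b ≠ 0 := by
    rw [Complex.cpow_def_of_ne_zero hn0]; exact Complex.exp_ne_zero _
  have hcpa' : (n:ℂ)^a' ≠ 0 := by
    rw [Complex.cpow_def_of_ne_zero hn0]; exact Complex.exp_ne_zero _
  have hcpb' : (n:ℂ)^b' ≠ 0 := by
    rw [Complex.cpow_def_of_ne_zero hn0]; exact Complex.exp_ne_zero _
  have hcpow : (n:ℂ)^a * (n:ℂ)^b = (n:ℂ)^a' * (n:ℂ)^b' := by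
    rw [← Complex.cpow_add _ _ hn0, ← Complex.cpow_add _ _ hn0]
    congr 1
    rw [ha, hb, ha', hb']; ring
  show Complex.GammaSeq a n * Complex.GammaSeq b n /
      (Complex.GammaSeq a' n * Complex.GammaSeq b' n) = _
  have hprod : ∏ j ∈ Finset.range (n+1), (Rnum c d s j / Rden c d s j) =
      ((∏ j ∈ Finset.range (n+1), (a' + j)) * ∏ j ∈ Finset.range (n+1), (b' + j)) /
      ((∏ j ∈ Finset.range (n+1), (a + j)) * ∏ j ∈ Finset.range (n+1), (b + j)) := by
    rw [Finset.prod_div_distrib]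
    congr 1
    · rw [← Finset.prod_mul_distrib]
      apply Finset.prod_congr rfl
      intro j _
      rw [Rnum, ha', hb']
    · rw [← Finset.prod_mul_distrib]
      apply Finset.prod_congr rfl
      intro j _
      rw [Rden, ha, hb]
  rw [hprod, Complex.GammaSeq, Complex.GammaSeq, Complex.GammaSeq, Complex.GammaSeq]
  field_simp
  linear_combination hcpow

section estimates
variable {c d : ℂ} {s : ℝ}

-- single factor lower bound on squared norm
lemma factor_sq_lb {x y e s : ℝ} (j : ℕ) (he : 0 < e) (he1 : e ≤ 1) (hx : e ≤ x)
    (hy : s/2 ≤ |y|) (hs : 0 ≤ s) :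
    (e^2/4) * (((j:ℝ)+1)^2 + s^2) ≤ (x + j)^2 + y^2 := by
  have hj : (0:ℝ) ≤ (j:ℝ) := Nat.cast_nonneg j
  have h1 : e*((j:ℝ)+1) ≤ x + j := by nlinarith
  have h2 : (e*((j:ℝ)+1))^2 ≤ (x+j)^2 := by
    apply sq_le_sq' _ h1
    nlinarith
  have h3 : (s/2)^2 ≤ y^2 := by
    have := sq_abs y
    nlinarith [sq_nonneg y, abs_nonneg y]
  have he2 : e^2 ≤ 1 := by nlinarith
  have h4 : e^2*s^2/4 ≤ s^2/4 := by nlinarith [sq_nonneg s]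
  nlinarith [sq_nonneg ((j:ℝ)+1)]

lemma im_sub (z : ℂ) (s : ℝ) (j : ℕ) : (z - Complex.I*s + j).im = z.im - s := by
  simp [Complex.sub_im, Complex.add_im, Complex.mul_im]

lemma im_add (z : ℂ) (s : ℝ) (j : ℕ) : (z + Complex.I*s + j).im = z.im + s := by
  simp [Complex.add_im, Complex.mul_im]

lemma re_sub (z : ℂ) (s : ℝ) (j : ℕ) : (z - Complex.I*s + j).re = z.re + j := by
  simp [Complex.sub_re, Complex.add_re, Complex.mul_re]

lemma re_add (z : ℂ) (s : ℝ) (j : ℕ) : (z + Complex.I*s + j).re = z.re + j := by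
  simp [Complex.add_re, Complex.mul_re]

lemma norm_sq_eq' (z : ℂ) : ‖z‖^2 = z.re^2 + z.im^2 := by
  rw [Complex.sq_norm, Complex.normSq_apply]; ring

lemma Rden_norm_lb (hc : 0 < c.re) (hd : 0 < d.re)
    (hs : 2*(|c.im| + |d.im|) ≤ s) (hs1 : 1 ≤ s) (j : ℕ) :
    ((min (min c.re d.re) 1)^2/4) * (((j:ℝ)+1)^2 + s^2) ≤ ‖Rden c d s j‖ := by
  set e := min (min c.re d.re) 1 with hedef
  have he : 0 < e := lt_min (lt_min hc hd) one_pos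
  have he1 : e ≤ 1 := min_le_right _ _
  have hs0 : (0:ℝ) ≤ s := by linarith
  set E := (((j:ℝ)+1)^2 + s^2) with hE
  have hEpos : 0 < E := by positivity
  -- norms of the two factors
  have hA : (e^2/4) * E ≤ ‖c - Complex.I*s + j‖^2 := by
    rw [norm_sq_eq', re_sub, im_sub]
    apply factor_sq_lb j he he1 (le_trans (min_le_left _ _) (min_le_left _ _))
    · rw [abs_sub_comm]
      rw [le_abs]
      left
      have := abs_nonneg c.im
      have h2 : c.im ≤ |c.im| := le_abs_self _
      have h3 : 0 ≤ |d.im| := abs_nonneg _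
      linarith
    · exact hs0
  have hB : (e^2/4) * E ≤ ‖d + Complex.I*s + j‖^2 := by
    rw [norm_sq_eq', re_add, im_add]
    apply factor_sq_lb j he he1 (le_trans (min_le_left _ _) (min_le_right _ _))
    · rw [le_abs]
      left
      have h2 : -|d.im| ≤ d.im := neg_abs_le _
      have h3 : 0 ≤ |c.im| := abs_nonneg _
      linarith
    · exact hs0
  have hk : (0:ℝ) ≤ (e^2/4) * E := by positivity
  have hA' : Real.sqrt ((e^2/4) * E) ≤ ‖c - Complex.I*s + j‖ := by
    rw [show ‖c - Complex.I*s + j‖ = Real.sqrt (‖c - Complex.I*s + j‖^2) by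
      rw [Real.sqrt_sq (norm_nonneg _)]]
    exact Real.sqrt_le_sqrt hA
  have hB' : Real.sqrt ((e^2/4) * E) ≤ ‖d + Complex.I*s + j‖ := by
    rw [show ‖d + Complex.I*s + j‖ = Real.sqrt (‖d + Complex.I*s + j‖^2) by
      rw [Real.sqrt_sq (norm_nonneg _)]]
    exact Real.sqrt_le_sqrt hB
  have := mul_le_mul hA' hB' (Real.sqrt_nonneg _) (norm_nonneg _)
  rw [Rden, norm_mul]
  calc (e^2/4) * E = Real.sqrt ((e^2/4) * E) * Real.sqrt ((e^2/4) * E) :=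
      (Real.mul_self_sqrt hk).symm
    _ ≤ _ := this

end estimates

section estimates2
variable {c d : ℂ} {s : ℝ}

lemma norm_two_I_s (c d : ℂ) {s : ℝ} (hs : 0 ≤ s) : ‖2*Complex.I*(s:ℂ)*(d - c)‖ = 2*s*‖d-c‖ := by
  simp [norm_mul, Complex.norm_real, abs_of_nonneg hs]

lemma uu_norm_le (hc : 0 < c.re) (hd : 0 < d.re)
    (hs : 2*(|c.im| + |d.im|) ≤ s) (hs1 : 1 ≤ s) (j : ℕ) :
    ‖uu c d s j‖ ≤ (8*‖d-c‖/(min (min c.re d.re) 1)^2) * (s/(((j:ℝ)+1)^2+s^2)) := by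
  set e := min (min c.re d.re) 1 with hedef
  have he : 0 < e := lt_min (lt_min hc hd) one_pos
  set E := (((j:ℝ)+1)^2 + s^2) with hE
  have hEpos : 0 < E := by positivity
  have hden := Rden_norm_lb hc hd hs hs1 j
  have hdenpos : 0 < (e^2/4) * E := by positivity
  have hs0 : (0:ℝ) ≤ s := by linarith
  rw [uu, norm_div, norm_two_I_s c d hs0]
  calc 2*s*‖d-c‖ / ‖Rden c d s j‖ ≤ 2*s*‖d-c‖ / ((e^2/4) * E) := by
        apply div_le_div_of_nonneg_left _ hdenpos hden
        positivity
    _ = (8*‖d-c‖/e^2) * (s/E) := by field_simp; ring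
  
lemma Rden_sub_eq (c d : ℂ) (s : ℝ) (j : ℕ) :
    Rden c d s j - (((j:ℕ):ℂ)^2+(s:ℂ)^2) =
      c*d + c*((j:ℂ)+Complex.I*s) + d*((j:ℂ)-Complex.I*s) := by
  rw [Rden]
  linear_combination (-(s:ℂ)^2) * Complex.I_sq

lemma norm_j_add_Is (j : ℕ) (s : ℝ) : ‖(j:ℂ) + Complex.I*s‖ = Real.sqrt ((j:ℝ)^2+s^2) := by
  have h := norm_sq_eq' ((j:ℂ) + Complex.I*s)
  have hre : ((j:ℂ) + Complex.I*s).re = (j:ℝ) := by simp [Complex.add_re, Complex.mul_re]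
  have him : ((j:ℂ) + Complex.I*s).im = s := by simp [Complex.add_im, Complex.mul_im]
  rw [hre, him] at h
  rw [← h, Real.sqrt_sq (norm_nonneg _)]

lemma norm_j_sub_Is (j : ℕ) (s : ℝ) : ‖(j:ℂ) - Complex.I*s‖ = Real.sqrt ((j:ℝ)^2+s^2) := by
  have h := norm_sq_eq' ((j:ℂ) - Complex.I*s)
  have hre : ((j:ℂ) - Complex.I*s).re = (j:ℝ) := by simp [Complex.sub_re, Complex.mul_re]
  have him : ((j:ℂ) - Complex.I*s).im = -s := by simp [Complex.sub_im, Complex.mul_im]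
  rw [hre, him] at h
  have : (-s)^2 = s^2 := by ring
  rw [this] at h
  rw [← h, Real.sqrt_sq (norm_nonneg _)]

lemma uu_sub_vv_norm_le (hc : 0 < c.re) (hd : 0 < d.re)
    (hs : 2*(|c.im| + |d.im|) ≤ s) (hs1 : 1 ≤ s) (j : ℕ) :
    ‖uu c d s j - vv c d s j‖ ≤
      (8*(‖c‖*‖d‖+‖c‖+‖d‖)*‖d-c‖/(min (min c.re d.re) 1)^2) *
        (1/(((j:ℝ)+1)^2+s^2)) := by
  set e := min (min c.re d.re) 1 with hedef
  have he : 0 < e := lt_min (lt_min hc hd) one_pos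
  set E := (((j:ℝ)+1)^2 + s^2) with hE
  have hEpos : 0 < E := by positivity
  have hs0 : (0:ℝ) < s := by linarith
  set q := Real.sqrt ((j:ℝ)^2+s^2) with hq
  have hq2 : q^2 = (j:ℝ)^2+s^2 := Real.sq_sqrt (by positivity)
  have hqs : s ≤ q := by
    have h := Real.sqrt_le_sqrt (show s^2 ≤ (j:ℝ)^2+s^2 by nlinarith [sq_nonneg ((j:ℝ))])
    rwa [Real.sqrt_sq hs0.le] at h
  have hq1 : 1 ≤ q := le_trans hs1 hqs
  have hqpos : 0 < q := lt_of_lt_of_le one_pos hq1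
  have hcast : (((j:ℕ):ℂ)^2+(s:ℂ)^2) = ((((j:ℝ)^2+s^2 : ℝ)):ℂ) := by push_cast; ring
  have hjs_pos : (0:ℝ) < (j:ℝ)^2+s^2 := by positivity
  have hjs : (((j:ℕ):ℂ)^2+(s:ℂ)^2) ≠ 0 := by
    rw [hcast]
    exact_mod_cast ne_of_gt (by exact_mod_cast hjs_pos : (0:ℝ) < ((j:ℝ)^2+s^2))
  have hden0 : Rden c d s j ≠ 0 := Rden_ne_zero hc hd s j
  have hiden : uu c d s j - vv c d s j =
      2*Complex.I*(s:ℂ)*(d - c) * (((((j:ℕ):ℂ)^2+(s:ℂ)^2) - Rden c d s j) /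
        (Rden c d s j * (((j:ℕ):ℂ)^2+(s:ℂ)^2))) := by
    rw [uu, vv]
    field_simp
  have hnum : ‖(((j:ℕ):ℂ)^2+(s:ℂ)^2) - Rden c d s j‖ ≤ (‖c‖*‖d‖+‖c‖+‖d‖) * q := by
    rw [norm_sub_rev, Rden_sub_eq]
    calc ‖c*d + c*((j:ℂ)+Complex.I*s) + d*((j:ℂ)-Complex.I*s)‖
        ≤ ‖c*d‖ + ‖c*((j:ℂ)+Complex.I*s)‖ + ‖d*((j:ℂ)-Complex.I*s)‖ := norm_add₃_le
      _ = ‖c‖*‖d‖ + ‖c‖*q + ‖d‖*q := by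
          rw [norm_mul, norm_mul, norm_mul, norm_j_add_Is, norm_j_sub_Is]
      _ ≤ (‖c‖*‖d‖+‖c‖+‖d‖) * q := by nlinarith [mul_nonneg (mul_nonneg (norm_nonneg c) (norm_nonneg d)) (sub_nonneg.mpr hq1)]
  have hdenlb := Rden_norm_lb hc hd hs hs1 j
  have hnorm_js : ‖(((j:ℕ):ℂ)^2+(s:ℂ)^2)‖ = q^2 := by
    rw [hcast, Complex.norm_real, Real.norm_eq_abs, abs_of_pos hjs_pos, hq2]
  rw [hiden, norm_mul, norm_two_I_s c d hs0.le, norm_div, norm_mul, hnorm_js]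
  set K := ‖c‖*‖d‖+‖c‖+‖d‖ with hK
  have hK0 : 0 ≤ K := by positivity
  have hdc0 : 0 ≤ ‖d-c‖ := norm_nonneg _
  have hEe : 0 < (e^2/4)*E := by positivity
  calc 2*s*‖d-c‖ * (‖(((j:ℕ):ℂ)^2+(s:ℂ)^2) - Rden c d s j‖ / (‖Rden c d s j‖ * q^2))
      ≤ 2*s*‖d-c‖ * ((K*q) / (((e^2/4)*E) * q^2)) := by
        apply mul_le_mul_of_nonneg_left _ (by positivity)
        apply div_le_div₀ (by positivity) hnum (by positivity)
        apply mul_le_mul_of_nonneg_right hdenlb (by positivity)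
    _ = (8*K*‖d-c‖/e^2) * (s/(E*q)) := by field_simp; ring
    _ ≤ (8*K*‖d-c‖/e^2) * (1/E) := by
        apply mul_le_mul_of_nonneg_left _ (by positivity)
        rw [div_le_div_iff₀ (by positivity) hEpos]
        nlinarith [mul_le_mul_of_nonneg_right hqs hEpos.le]

end estimates2

section assembly
variable {c d : ℂ}

lemma log_ratio_sub_uu (hc : 0 < c.re) (hd : 0 < d.re) {s : ℝ} {j : ℕ}
    (hu : ‖uu c d s j‖ ≤ 1/2) :
    ‖Complex.log (Rnum c d s j / Rden c d s j) - uu c d s j‖ ≤ ‖uu c d s j‖^2 := by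
  rw [ratio_eq_one_add_uu hc hd]
  have h := Complex.norm_log_one_add_sub_self_le (lt_of_le_of_lt hu one_half_lt_one)
  have h2 : (1 - ‖uu c d s j‖)⁻¹ ≤ 2 := by
    rw [show (2:ℝ) = (1/2 : ℝ)⁻¹ by norm_num]
    apply inv_anti₀ (by norm_num)
    linarith
  calc ‖Complex.log (1 + uu c d s j) - uu c d s j‖
      ≤ ‖uu c d s j‖^2 * (1 - ‖uu c d s j‖)⁻¹ / 2 := h
    _ ≤ ‖uu c d s j‖^2 * 2 / 2 := by
        apply div_le_div_of_nonneg_right _ (by norm_num : (0:ℝ) ≤ 2)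
        apply mul_le_mul_of_nonneg_left h2 (by positivity)
    _ = ‖uu c d s j‖^2 := by ring

-- key quantitative estimate
lemma tsum_log_close (hc : 0 < c.re) (hd : 0 < d.re) {s : ℝ}
    (hs1 : 1 ≤ s) (hs2 : 2*(|c.im| + |d.im|) ≤ s)
    (hs3 : 16*(‖d-c‖+1) ≤ (min (min c.re d.re) 1)^2 * s) :
    ‖(∑' j : ℕ, Complex.log (Rnum c d s j / Rden c d s j)) - Real.pi*(d-c)*Complex.I‖ ≤
      (2*(8*‖d-c‖/(min (min c.re d.re) 1)^2)^2 +
       2*(8*(‖c‖*‖d‖+‖c‖+‖d‖)*‖d-c‖/(min (min c.re d.re) 1)^2) + 2*‖d-c‖)/s := by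
  set e := min (min c.re d.re) 1 with hedef
  have he : 0 < e := lt_min (lt_min hc hd) one_pos
  have hs0 : (0:ℝ) < s := by linarith
  set B := 8*‖d-c‖/e^2 with hB
  have hB0 : 0 ≤ B := by positivity
  set K := ‖c‖*‖d‖+‖c‖+‖d‖ with hK
  set C := 8*K*‖d-c‖/e^2 with hC
  have hC0 : 0 ≤ C := by positivity
  -- individual bounds
  have hsE : ∀ j : ℕ, s/(((j:ℝ)+1)^2+s^2) ≤ 1/s := by
    intro j
    rw [div_le_div_iff₀ (by positivity) hs0]
    nlinarith [sq_nonneg ((j:ℝ)+1), sq_nonneg s]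
  have hub : ∀ j : ℕ, ‖uu c d s j‖ ≤ B * (s/(((j:ℝ)+1)^2+s^2)) := fun j =>
    uu_norm_le hc hd hs2 hs1 j
  have husmall : ∀ j : ℕ, ‖uu c d s j‖ ≤ 1/2 := by
    intro j
    calc ‖uu c d s j‖ ≤ B * (s/(((j:ℝ)+1)^2+s^2)) := hub j
      _ ≤ B * (1/s) := mul_le_mul_of_nonneg_left (hsE j) hB0
      _ ≤ 1/2 := by
          have h1 : B * (1/s) = 8*‖d-c‖/(e^2*s) := by rw [hB]; field_simp
          rw [h1, div_le_div_iff₀ (by positivity) (by norm_num : (0:ℝ) < 2)]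
          nlinarith [norm_nonneg (d-c)]
  -- summability
  have hsumE : Summable (fun j : ℕ => 1/(((j:ℝ)+1)^2+s^2)) := summable_E hs0
  have hsumU : Summable (fun j : ℕ => uu c d s j) := by
    apply Summable.of_norm_bounded (hsumE.mul_left (B*s))
    intro j
    calc ‖uu c d s j‖ ≤ B * (s/(((j:ℝ)+1)^2+s^2)) := hub j
      _ = B*s * (1/(((j:ℝ)+1)^2+s^2)) := by ring
  have hsumV : Summable (fun j : ℕ => vv c d s j) := by
    apply Summable.of_norm_bounded ((summable_g hs0).mul_left (2*‖d-c‖))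
    intro j
    rw [vv, norm_div, norm_two_I_s c d hs0.le]
    have hcast : (((j:ℕ):ℂ)^2+(s:ℂ)^2) = ((((j:ℝ)^2+s^2 : ℝ)):ℂ) := by push_cast; ring
    rw [hcast, Complex.norm_real, Real.norm_eq_abs, abs_of_pos (by positivity)]
    exact le_of_eq (by ring)
  have hsumLog : Summable (fun j : ℕ => Complex.log (Rnum c d s j / Rden c d s j)) := by
    apply Summable.of_norm_bounded (hsumE.mul_left ((3/2)*(B*s)))
    intro j
    rw [ratio_eq_one_add_uu hc hd]
    calc ‖Complex.log (1 + uu c d s j)‖ ≤ (3/2) * ‖uu c d s j‖ :=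
        Complex.norm_log_one_add_half_le_self (husmall j)
      _ ≤ (3/2) * (B * (s/(((j:ℝ)+1)^2+s^2))) :=
        mul_le_mul_of_nonneg_left (hub j) (by norm_num)
      _ = (3/2)*(B*s) * (1/(((j:ℝ)+1)^2+s^2)) := by ring
  -- term 1 : ∑ ‖log - u‖ ≤ 2 B^2 / s
  have hterm1 : ‖∑' j : ℕ, (Complex.log (Rnum c d s j / Rden c d s j) - uu c d s j)‖ ≤
      B^2 * (2/s) := by
    have hb : ∀ j : ℕ, ‖Complex.log (Rnum c d s j / Rden c d s j) - uu c d s j‖ ≤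
        B^2 * (1/(((j:ℝ)+1)^2+s^2)) := by
      intro j
      calc ‖Complex.log (Rnum c d s j / Rden c d s j) - uu c d s j‖ ≤ ‖uu c d s j‖^2 :=
          log_ratio_sub_uu hc hd (husmall j)
        _ ≤ (B * (s/(((j:ℝ)+1)^2+s^2)))^2 := by
            apply sq_le_sq' _ (hub j)
            have := norm_nonneg (uu c d s j); have := hub j
            nlinarith [mul_nonneg hB0 (le_of_lt (show (0:ℝ) < s/(((j:ℝ)+1)^2+s^2) by positivity))]
        _ = B^2 * (s/(((j:ℝ)+1)^2+s^2)) * (s/(((j:ℝ)+1)^2+s^2)) := by ring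
        _ ≤ B^2 * (s/(((j:ℝ)+1)^2+s^2)) * (1/s) := by
            apply mul_le_mul_of_nonneg_left (hsE j) (by positivity)
        _ = B^2 * (1/(((j:ℝ)+1)^2+s^2)) := by
            field_simp
    calc ‖∑' j : ℕ, (Complex.log (Rnum c d s j / Rden c d s j) - uu c d s j)‖
        ≤ ∑' j : ℕ, (B^2 * (1/(((j:ℝ)+1)^2+s^2))) := by
          apply tsum_of_norm_bounded (((summable_E hs0).mul_left (B^2)).hasSum) hb
      _ = B^2 * ∑' j : ℕ, (1/(((j:ℝ)+1)^2+s^2)) := tsum_mul_left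
      _ ≤ B^2 * (2/s) := mul_le_mul_of_nonneg_left (tsum_E_le hs1) (by positivity)
  -- term 2 : ∑ ‖u - v‖ ≤ 2 C / s
  have hterm2 : ‖∑' j : ℕ, (uu c d s j - vv c d s j)‖ ≤ C * (2/s) := by
    calc ‖∑' j : ℕ, (uu c d s j - vv c d s j)‖
        ≤ ∑' j : ℕ, (C * (1/(((j:ℝ)+1)^2+s^2))) := by
          apply tsum_of_norm_bounded (((summable_E hs0).mul_left C).hasSum)
          intro j
          exact uu_sub_vv_norm_le hc hd hs2 hs1 j
      _ = C * ∑' j : ℕ, (1/(((j:ℝ)+1)^2+s^2)) := tsum_mul_left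
      _ ≤ C * (2/s) := mul_le_mul_of_nonneg_left (tsum_E_le hs1) hC0
  -- term 3
  have hVsum : (∑' j : ℕ, vv c d s j) = 2*Complex.I*(d-c) *
      (((∑' j : ℕ, s/((j:ℝ)^2+s^2)) : ℝ) : ℂ) := by
    rw [Complex.ofReal_tsum, ← tsum_mul_left]
    apply tsum_congr
    intro j
    rw [vv]
    have hcast : (((j:ℕ):ℂ)^2+(s:ℂ)^2) = ((((j:ℝ)^2+s^2 : ℝ)):ℂ) := by push_cast; ring
    rw [hcast]
    have hne : ((((j:ℝ)^2+s^2 : ℝ)):ℂ) ≠ 0 := by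
      exact_mod_cast ne_of_gt (show (0:ℝ) < (j:ℝ)^2+s^2 by positivity)
    rw [Complex.ofReal_div]
    field_simp
  have hterm3 : ‖(∑' j : ℕ, vv c d s j) - Real.pi*(d-c)*Complex.I‖ ≤ 2*‖d-c‖ * (1/s) := by
    rw [hVsum]
    have : 2*Complex.I*(d-c) * (((∑' j : ℕ, s/((j:ℝ)^2+s^2)) : ℝ) : ℂ) -
        Real.pi*(d-c)*Complex.I =
        2*Complex.I*(d-c) * ((((∑' j : ℕ, s/((j:ℝ)^2+s^2)) - π/2 : ℝ)) : ℂ) := by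
      push_cast
      ring
    rw [this, norm_mul, norm_mul, norm_mul]
    simp only [Complex.norm_real, Real.norm_eq_abs, Complex.norm_I, Complex.norm_ofNat]
    have habs := tsum_g_close hs1
    calc 2*1*‖d-c‖ * |(∑' j : ℕ, s/((j:ℝ)^2+s^2)) - π/2| ≤ 2*1*‖d-c‖ * (1/s) := by
          apply mul_le_mul_of_nonneg_left habs (by positivity)
      _ = 2*‖d-c‖ * (1/s) := by ring
  -- combine
  have hdecomp : (∑' j : ℕ, Complex.log (Rnum c d s j / Rden c d s j)) - Real.pi*(d-c)*Complex.I =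
      (∑' j : ℕ, (Complex.log (Rnum c d s j / Rden c d s j) - uu c d s j)) +
      (∑' j : ℕ, (uu c d s j - vv c d s j)) +
      ((∑' j : ℕ, vv c d s j) - Real.pi*(d-c)*Complex.I) := by
    rw [Summable.tsum_sub hsumLog hsumU, Summable.tsum_sub hsumU hsumV]
    ring
  rw [hdecomp]
  calc ‖_ + _ + _‖ ≤ ‖(∑' j : ℕ, (Complex.log (Rnum c d s j / Rden c d s j) - uu c d s j))‖ +
        ‖(∑' j : ℕ, (uu c d s j - vv c d s j))‖ +
        ‖(∑' j : ℕ, vv c d s j) - Real.pi*(d-c)*Complex.I‖ := norm_add₃_le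
    _ ≤ B^2 * (2/s) + C * (2/s) + 2*‖d-c‖ * (1/s) :=
        add_le_add (add_le_add hterm1 hterm2) hterm3
    _ = (2*B^2 + 2*C + 2*‖d-c‖)/s := by field_simp

end assembly

section final
variable {c d : ℂ}

lemma summable_log (hc : 0 < c.re) (hd : 0 < d.re) {s : ℝ}
    (hs1 : 1 ≤ s) (hs2 : 2*(|c.im| + |d.im|) ≤ s)
    (hs3 : 16*(‖d-c‖+1) ≤ (min (min c.re d.re) 1)^2 * s) :
    Summable (fun j : ℕ => Complex.log (Rnum c d s j / Rden c d s j)) := by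
  set e := min (min c.re d.re) 1 with hedef
  have he : 0 < e := lt_min (lt_min hc hd) one_pos
  have hs0 : (0:ℝ) < s := by linarith
  set B := 8*‖d-c‖/e^2 with hB
  have hB0 : 0 ≤ B := by positivity
  have hsE : ∀ j : ℕ, s/(((j:ℝ)+1)^2+s^2) ≤ 1/s := by
    intro j
    rw [div_le_div_iff₀ (by positivity) hs0]
    nlinarith [sq_nonneg ((j:ℝ)+1), sq_nonneg s]
  have hub : ∀ j : ℕ, ‖uu c d s j‖ ≤ B * (s/(((j:ℝ)+1)^2+s^2)) := fun j =>
    uu_norm_le hc hd hs2 hs1 j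
  have husmall : ∀ j : ℕ, ‖uu c d s j‖ ≤ 1/2 := by
    intro j
    calc ‖uu c d s j‖ ≤ B * (s/(((j:ℝ)+1)^2+s^2)) := hub j
      _ ≤ B * (1/s) := mul_le_mul_of_nonneg_left (hsE j) hB0
      _ ≤ 1/2 := by
          have h1 : B * (1/s) = 8*‖d-c‖/(e^2*s) := by rw [hB]; field_simp
          rw [h1, div_le_div_iff₀ (by positivity) (by norm_num : (0:ℝ) < 2)]
          nlinarith [norm_nonneg (d-c)]
  apply Summable.of_norm_bounded ((summable_E hs0).mul_left ((3/2)*(B*s)))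
  intro j
  rw [ratio_eq_one_add_uu hc hd]
  calc ‖Complex.log (1 + uu c d s j)‖ ≤ (3/2) * ‖uu c d s j‖ :=
      Complex.norm_log_one_add_half_le_self (husmall j)
    _ ≤ (3/2) * (B * (s/(((j:ℝ)+1)^2+s^2))) :=
      mul_le_mul_of_nonneg_left (hub j) (by norm_num)
    _ = (3/2)*(B*s) * (1/(((j:ℝ)+1)^2+s^2)) := by ring

lemma gamma_ratio_eq_exp (hc : 0 < c.re) (hd : 0 < d.re) {s : ℝ}
    (hsumLog : Summable (fun j : ℕ => Complex.log (Rnum c d s j / Rden c d s j))) :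
    Complex.Gamma (c - Complex.I*s) * Complex.Gamma (d + Complex.I*s) /
      (Complex.Gamma (c + Complex.I*s) * Complex.Gamma (d - Complex.I*s)) =
    Complex.exp (∑' j : ℕ, Complex.log (Rnum c d s j / Rden c d s j)) := by
  have h1 := tendsto_prod_ratio c d hc hd s
  have hprod : ∀ n : ℕ, ∏ j ∈ Finset.range (n+1), (Rnum c d s j / Rden c d s j) =
      Complex.exp (∑ j ∈ Finset.range (n+1),
        Complex.log (Rnum c d s j / Rden c d s j)) := by
    intro n
    rw [Complex.exp_sum]
    apply Finset.prod_congr rfl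
    intro j _
    rw [Complex.exp_log (div_ne_zero (Rnum_ne_zero hc hd s j) (Rden_ne_zero hc hd s j))]
  have h3 : Tendsto (fun n : ℕ => ∑ j ∈ Finset.range (n+1),
      Complex.log (Rnum c d s j / Rden c d s j)) atTop
      (𝓝 (∑' j : ℕ, Complex.log (Rnum c d s j / Rden c d s j))) :=
    hsumLog.hasSum.tendsto_sum_nat.comp (tendsto_add_atTop_nat 1)
  have h2 : Tendsto (fun n : ℕ => ∏ j ∈ Finset.range (n+1), (Rnum c d s j / Rden c d s j))
      atTop (𝓝 (Complex.exp (∑' j : ℕ, Complex.log (Rnum c d s j / Rden c d s j)))) := by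
    simp only [hprod]
    exact (Complex.continuous_exp.tendsto _).comp h3
  exact tendsto_nhds_unique h1 h2

lemma main_aux (c d : ℂ) (hc : 0 < c.re) (hd : 0 < d.re) :
    Tendsto (fun s : ℝ => Complex.Gamma (c - Complex.I*s) * Complex.Gamma (d + Complex.I*s) /
      (Complex.Gamma (c + Complex.I*s) * Complex.Gamma (d - Complex.I*s))) atTop
      (𝓝 (Complex.exp (Real.pi*(d-c)*Complex.I))) := by
  set e := min (min c.re d.re) 1 with hedef
  have he : 0 < e := lt_min (lt_min hc hd) one_pos
  set A := 2*(8*‖d-c‖/e^2)^2 + 2*(8*(‖c‖*‖d‖+‖c‖+‖d‖)*‖d-c‖/e^2) + 2*‖d-c‖ with hA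
  set s₀ := max (max 1 (2*(|c.im|+|d.im|))) (16*(‖d-c‖+1)/e^2) with hs₀
  have hcond : ∀ s : ℝ, s₀ ≤ s → (1 ≤ s ∧ 2*(|c.im|+|d.im|) ≤ s ∧
      16*(‖d-c‖+1) ≤ e^2*s) := by
    intro s hs
    refine ⟨le_trans (le_trans (le_max_left _ _) (le_max_left _ _)) hs,
      le_trans (le_trans (le_max_right _ _) (le_max_left _ _)) hs, ?_⟩
    have h1 : 16*(‖d-c‖+1)/e^2 ≤ s := le_trans (le_max_right _ _) hs
    rw [div_le_iff₀ (by positivity)] at h1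
    nlinarith [sq_nonneg e]
  have hS : Tendsto (fun s : ℝ => ∑' j : ℕ,
      Complex.log (Rnum c d s j / Rden c d s j)) atTop
      (𝓝 (Real.pi*(d-c)*Complex.I)) := by
    rw [tendsto_iff_norm_sub_tendsto_zero]
    apply squeeze_zero_norm' (a := fun s : ℝ => A/s)
    · filter_upwards [eventually_ge_atTop s₀] with s hs
      obtain ⟨h1, h2, h3⟩ := hcond s hs
      simpa using tsum_log_close hc hd h1 h2 h3
    · exact tendsto_const_nhds.div_atTop tendsto_id
  have hEq : ∀ᶠ s : ℝ in atTop,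
      Complex.exp (∑' j : ℕ, Complex.log (Rnum c d s j / Rden c d s j)) =
      Complex.Gamma (c - Complex.I*s) * Complex.Gamma (d + Complex.I*s) /
        (Complex.Gamma (c + Complex.I*s) * Complex.Gamma (d - Complex.I*s)) := by
    filter_upwards [eventually_ge_atTop s₀] with s hs
    obtain ⟨h1, h2, h3⟩ := hcond s hs
    exact (gamma_ratio_eq_exp hc hd (summable_log hc hd h1 h2 h3)).symm
  have := (Complex.continuous_exp.tendsto _).comp hS
  exact Tendsto.congr' hEq this

end final

/-- As `t → +∞`,
`Γ((m+1−it)/2)Γ((m'+1+it)/2) / (Γ((m+1+it)/2)Γ((m'+1−it)/2)) → e^{−iπ(m−m')/2}`. -/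
theorem stmt6 (m m' : ℂ) (hm : -1 < m.re) (hm' : -1 < m'.re) :
    Tendsto (fun t : ℝ =>
        Complex.Gamma ((m + 1 - Complex.I * t) / 2) * Complex.Gamma ((m' + 1 + Complex.I * t) / 2) /
          (Complex.Gamma ((m + 1 + Complex.I * t) / 2) *
            Complex.Gamma ((m' + 1 - Complex.I * t) / 2)))
      atTop (nhds (Complex.exp (-Complex.I * Real.pi * (m - m') / 2))) := by
  set c := (m+1)/2 with hcdef
  set d := (m'+1)/2 with hddef
  have hre : ∀ z : ℂ, ((z+1)/2).re = (z.re+1)/2 := by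
    intro z
    rw [show (2:ℂ) = ((2:ℝ):ℂ) by norm_num, Complex.div_ofReal_re]
    simp [Complex.add_re]
  have hc : 0 < c.re := by rw [hcdef, hre]; linarith
  have hd : 0 < d.re := by rw [hddef, hre]; linarith
  have key : Tendsto (fun t : ℝ =>
      Complex.Gamma (c - Complex.I*((t/2 : ℝ):ℂ)) * Complex.Gamma (d + Complex.I*((t/2:ℝ):ℂ)) /
        (Complex.Gamma (c + Complex.I*((t/2:ℝ):ℂ)) * Complex.Gamma (d - Complex.I*((t/2:ℝ):ℂ))))
      atTop (𝓝 (Complex.exp (Real.pi*(d-c)*Complex.I))) :=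
    (main_aux c d hc hd).comp (tendsto_id.atTop_div_const two_pos)
  have hexp : Complex.exp (-Complex.I * Real.pi * (m - m') / 2) =
      Complex.exp (Real.pi*(d-c)*Complex.I) := by
    congr 1
    rw [hcdef, hddef]
    ring
  rw [hexp]
  refine Tendsto.congr (fun t => ?_) key
  have e1 : c - Complex.I*((t/2:ℝ):ℂ) = (m + 1 - Complex.I*t)/2 := by
    rw [hcdef]; push_cast; ring
  have e2 : d + Complex.I*((t/2:ℝ):ℂ) = (m' + 1 + Complex.I*t)/2 := by
    rw [hddef]; push_cast; ring
  have e3 : c + Complex.I*((t/2:ℝ):ℂ) = (m + 1 + Complex.I*t)/2 := by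
    rw [hcdef]; push_cast; ring
  have e4 : d - Complex.I*((t/2:ℝ):ℂ) = (m' + 1 - Complex.I*t)/2 := by
    rw [hddef]; push_cast; ring
  rw [e1, e2, e3, e4]
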